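/- Let k be a field of characteristic ≠ 2 and let A ∈ 𝒞(k). Then A possesses a Kleinian subfield. Moreover, if A is not associative, then the right nucleus N_r(A) is a Kleinian subfield of A, and it is the unique Kleinian subfield of A. -/
import Mathlib


open Module Function

variable {k : Type} [Field k]

/-- A Kleinian pair for a nonassociative `k`-algebra `(A, mul)`: a pair of distinct commuting
automorphisms, each of order 2. -/
def IsKleinPair {A : Type} [AddCommGroup A] [Module k A]
    (mul : A →ₗ[k] A →ₗ[k] A) (α β : A ≃ₗ[k] A) : Prop :=
  (∀ x y : A, α (mul x y) = mul (α x) (α y)) ∧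
  (∀ x y : A, β (mul x y) = mul (β x) (β y)) ∧
  (∀ x : A, α (α x) = x) ∧ (∀ x : A, β (β x) = x) ∧
  (∀ x : A, α (β x) = β (α x)) ∧
  α ≠ LinearEquiv.refl k A ∧ β ≠ LinearEquiv.refl k A ∧ α ≠ β

/-- The right nucleus `N_r(A) = {z | (x·y)·z = x·(y·z) ∀ x y}`. -/
def rightNucleusSet {A : Type} [AddCommGroup A] [Module k A]
    (mul : A →ₗ[k] A →ₗ[k] A) : Set A :=
  {z | ∀ x y : A, mul (mul x y) z = mul x (mul y z)}

/-- A Kleinian subfield of a unital nonassociative division algebra `(A, mul, one)`: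
a subalgebra which is a (commutative, associative) field containing the unity, contained in
the right nucleus, and equal to `E_β(1)` for some Kleinian pair `(α, β)` of `A`. -/
def IsKleinianSubfield {A : Type} [AddCommGroup A] [Module k A]
    (mul : A →ₗ[k] A →ₗ[k] A) (one : A) (S : Set A) : Prop :=
  one ∈ S ∧
  (∀ x ∈ S, ∀ y ∈ S, x + y ∈ S) ∧
  (∀ t : k, ∀ x ∈ S, t • x ∈ S) ∧
  (∀ x ∈ S, ∀ y ∈ S, mul x y ∈ S) ∧
  (∀ x ∈ S, ∀ y ∈ S, mul x y = mul y x) ∧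
  (∀ x ∈ S, ∀ y ∈ S, ∀ z ∈ S, mul (mul x y) z = mul x (mul y z)) ∧
  (∀ x ∈ S, x ≠ 0 → ∃ y ∈ S, mul x y = one) ∧
  S ⊆ rightNucleusSet mul ∧
  (∃ α β : A ≃ₗ[k] A, IsKleinPair mul α β ∧ S = {x : A | β x = x})

set_option linter.unusedSectionVars false

namespace KleinAux

variable {A : Type} [AddCommGroup A] [Module k A]

/-- fixed submodule of a linear equiv -/
def fixedSub (β : A ≃ₗ[k] A) : Submodule k A where
  carrier := {x | β x = x}
  add_mem' := by intro a b ha hb; simp only [Set.mem_setOf_eq, map_add] at *; rw [ha, hb]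
  zero_mem' := by simp
  smul_mem' := by intro c x hx; simp only [Set.mem_setOf_eq, map_smul] at *; rw [hx]

def negSub (β : A ≃ₗ[k] A) : Submodule k A where
  carrier := {x | β x = -x}
  add_mem' := by intro a b ha hb; simp only [Set.mem_setOf_eq, map_add] at *; rw [ha, hb]; abel
  zero_mem' := by simp
  smul_mem' := by intro c x hx; simp only [Set.mem_setOf_eq, map_smul] at *; rw [hx, smul_neg]

def nucleus (mul : A →ₗ[k] A →ₗ[k] A) : Submodule k A where
  carrier := rightNucleusSet mul
  add_mem' := by
    intro a b ha hb x y
    simp only [map_add, ha x y, hb x y]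
  zero_mem' := by intro x y; simp
  smul_mem' := by
    intro c z hz x y
    simp only [map_smul, hz x y]

end KleinAux

namespace KleinAux

section Core

variable {A : Type} [AddCommGroup A] [Module k A]
variable {mul : A →ₗ[k] A →ₗ[k] A} {one : A}

theorem one_ne_zero' [FiniteDimensional k A] (h4 : finrank k A = 4)
    (hone : ∀ x : A, mul one x = x ∧ mul x one = x) : one ≠ 0 := by
  intro h
  have hz : ∀ x : A, x = 0 := by
    intro x
    rw [← (hone x).2, h, map_zero]
  have : Subsingleton A := ⟨fun a b => by rw [hz a, hz b]⟩
  rw [finrank_zero_of_subsingleton] at h4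
  omega

theorem left_cancel (hdiv : ∀ a : A, a ≠ 0 →
      Function.Bijective (fun x => mul a x) ∧ Function.Bijective (fun x => mul x a))
    {a x y : A} (ha : a ≠ 0) (h : mul a x = mul a y) : x = y :=
  (hdiv a ha).1.1 h

theorem right_cancel (hdiv : ∀ a : A, a ≠ 0 →
      Function.Bijective (fun x => mul a x) ∧ Function.Bijective (fun x => mul x a))
    {a x y : A} (ha : a ≠ 0) (h : mul x a = mul y a) : x = y :=
  (hdiv a ha).2.1 h

/-- an automorphism fixes the unit -/
theorem auto_fixes_one [FiniteDimensional k A] (h4 : finrank k A = 4)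
    (hone : ∀ x : A, mul one x = x ∧ mul x one = x)
    (hdiv : ∀ a : A, a ≠ 0 →
      Function.Bijective (fun x => mul a x) ∧ Function.Bijective (fun x => mul x a))
    (φ : A ≃ₗ[k] A) (hm : ∀ x y : A, φ (mul x y) = mul (φ x) (φ y)) :
    φ one = one := by
  have h1 : one ≠ 0 := one_ne_zero' h4 hone
  set e := φ one with he
  have he0 : e ≠ 0 := by
    rw [he, LinearEquiv.map_ne_zero_iff]
    exact h1
  have h2 : mul e e = mul e one := by
    rw [(hone e).2]
    have h3 := hm one one
    rw [(hone one).1] at h3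
    exact h3.symm
  exact left_cancel hdiv he0 h2

end Core

end KleinAux

namespace KleinAux

section Dim

variable {A : Type} [AddCommGroup A] [Module k A] [FiniteDimensional k A]
variable {mul : A →ₗ[k] A →ₗ[k] A} {one : A}

theorem fixed_sup_neg (hchar : (2:k) ≠ 0) (β : A ≃ₗ[k] A) (h2 : ∀ x, β (β x) = x) :
    fixedSub β ⊔ negSub β = ⊤ := by
  rw [eq_top_iff]
  intro x _
  have hmem : (2:k)⁻¹ • (x + β x) + (2:k)⁻¹ • (x - β x) = x := by
    rw [← smul_add]
    have h : x + β x + (x - β x) = (2:k) • x := by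
      rw [two_smul]; abel
    rw [h, smul_smul, inv_mul_cancel₀ hchar, one_smul]
  rw [← hmem]
  apply Submodule.add_mem_sup
  · show β _ = _
    rw [map_smul, map_add, h2 x, add_comm]
  · show β _ = -_
    rw [map_smul, map_sub, h2 x, ← smul_neg]
    congr 1
    abel

theorem fixed_inf_neg (hchar : (2:k) ≠ 0) (β : A ≃ₗ[k] A) :
    fixedSub β ⊓ negSub β = ⊥ := by
  rw [eq_bot_iff]
  rintro x ⟨h1, h2⟩
  have h1' : β x = x := h1
  have h2' : β x = -x := h2
  have hx : (2:k) • x = 0 := by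
    rw [two_smul]
    nth_rewrite 1 [← h1']
    rw [h2']
    abel
  rcases smul_eq_zero.mp hx with h | h
  · exact absurd h hchar
  · simpa using h

theorem finrank_fixed_eq_two (hchar : (2:k) ≠ 0) (h4 : finrank k A = 4)
    (hdiv : ∀ a : A, a ≠ 0 →
      Function.Bijective (fun x => mul a x) ∧ Function.Bijective (fun x => mul x a))
    (β : A ≃ₗ[k] A) (hm : ∀ x y : A, β (mul x y) = mul (β x) (β y))
    (h2 : ∀ x, β (β x) = x) (hne : β ≠ LinearEquiv.refl k A) :
    finrank k (fixedSub β) = 2 := by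
  have hsum := Submodule.finrank_sup_add_finrank_inf_eq (fixedSub β) (negSub β)
  rw [fixed_sup_neg hchar β h2, fixed_inf_neg hchar β, finrank_top, h4, finrank_bot] at hsum
  have hFne : negSub β ≠ ⊥ := by
    intro hF
    apply hne
    apply LinearEquiv.ext
    intro x
    have hx : x ∈ fixedSub β ⊔ negSub β := by
      rw [fixed_sup_neg hchar β h2]; trivial
    rw [hF, sup_bot_eq] at hx
    exact hx
  obtain ⟨x, hxF, hx0⟩ := (Submodule.ne_bot_iff _).mp hFne
  have hbij : Function.Bijective ⇑(mul x) := (hdiv x hx0).1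
  let e : A ≃ₗ[k] A := LinearEquiv.ofBijective (mul x) hbij
  have hxF' : β x = -x := hxF
  have hEF : Submodule.map (e : A →ₗ[k] A) (fixedSub β) ≤ negSub β := by
    rintro _ ⟨y, hy, rfl⟩
    show β (mul x y) = -(mul x y)
    rw [hm, hxF', (show β y = y from hy), map_neg, LinearMap.neg_apply]
  have hFE : Submodule.map (e : A →ₗ[k] A) (negSub β) ≤ fixedSub β := by
    rintro _ ⟨y, hy, rfl⟩
    show β (mul x y) = mul x y
    rw [hm, hxF', (show β y = -y from hy)]
    simp [map_neg]
  have hle1 : finrank k (fixedSub β) ≤ finrank k (negSub β) := by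
    calc finrank k (fixedSub β)
        = finrank k (Submodule.map (e : A →ₗ[k] A) (fixedSub β)) :=
          (LinearEquiv.finrank_map_eq e _).symm
      _ ≤ finrank k (negSub β) := Submodule.finrank_mono hEF
  have hle2 : finrank k (negSub β) ≤ finrank k (fixedSub β) := by
    calc finrank k (negSub β)
        = finrank k (Submodule.map (e : A →ₗ[k] A) (negSub β)) :=
          (LinearEquiv.finrank_map_eq e _).symm
      _ ≤ finrank k (fixedSub β) := Submodule.finrank_mono hFE
  omega

end Dim

end KleinAux

namespace KleinAux

section Field

variable {A : Type} [AddCommGroup A] [Module k A] [FiniteDimensional k A]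
variable {mul : A →ₗ[k] A →ₗ[k] A} {one : A}

theorem comm_of_finrank_le_two (h4 : finrank k A = 4)
    (hone : ∀ x : A, mul one x = x ∧ mul x one = x)
    (S : Submodule k A) (hS1 : one ∈ S) (hdim : finrank k S ≤ 2)
    {x y : A} (hx : x ∈ S) (hy : y ∈ S) : mul x y = mul y x := by
  have h1 : one ≠ 0 := one_ne_zero' h4 hone
  set v : Fin 3 → S := ![⟨one, hS1⟩, ⟨x, hx⟩, ⟨y, hy⟩] with hv
  have hnli : ¬ LinearIndependent k v := by
    intro hli
    have hc := hli.fintype_card_le_finrank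
    simp only [Fintype.card_fin] at hc
    omega
  obtain ⟨g, hg, i, hgi⟩ := Fintype.not_linearIndependent_iff.mp hnli
  have hgA : g 0 • one + g 1 • x + g 2 • y = 0 := by
    have hco : (↑(∑ i, g i • v i) : A) = 0 := by rw [hg]; rfl
    rw [Fin.sum_univ_three] at hco
    simpa [hv] using hco
  by_cases h2 : g 2 ≠ 0
  · have hy2 : y = -((g 2)⁻¹ • (g 0 • one + g 1 • x)) := by
      have hstep : g 2 • y = -(g 0 • one + g 1 • x) := by
        rw [eq_neg_iff_add_eq_zero]
        rw [← hgA]; abel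
      calc y = (g 2)⁻¹ • (g 2 • y) := by
              rw [smul_smul, inv_mul_cancel₀ h2, one_smul]
        _ = -((g 2)⁻¹ • (g 0 • one + g 1 • x)) := by rw [hstep, smul_neg]
    rw [hy2]
    simp [map_neg, map_smul, map_add, LinearMap.neg_apply, LinearMap.smul_apply,
      LinearMap.add_apply, (hone x).1, (hone x).2]
  · push_neg at h2
    by_cases h1' : g 1 ≠ 0
    · have hx2 : x = -((g 1)⁻¹ • (g 0 • one)) := by
        have hstep : g 1 • x = -(g 0 • one) := by
          rw [eq_neg_iff_add_eq_zero]
          have := hgA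
          rw [h2, zero_smul, add_zero] at this
          rw [← this]; abel
        calc x = (g 1)⁻¹ • (g 1 • x) := by
                rw [smul_smul, inv_mul_cancel₀ h1', one_smul]
          _ = -((g 1)⁻¹ • (g 0 • one)) := by rw [hstep, smul_neg]
      rw [hx2]
      simp [map_neg, map_smul, LinearMap.neg_apply, LinearMap.smul_apply,
        (hone y).1, (hone y).2]
    · push_neg at h1'
      exfalso
      rw [h2, h1', zero_smul, zero_smul, add_zero, add_zero] at hgA
      rcases smul_eq_zero.mp hgA with h | h
      · fin_cases i <;> simp_all
      · exact h1 h


theorem exists_right_inv (hdiv : ∀ a : A, a ≠ 0 →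
      Function.Bijective (fun x => mul a x) ∧ Function.Bijective (fun x => mul x a))
    (S : Submodule k A) (hone_mem : one ∈ S)
    (hclosed : ∀ x ∈ S, ∀ y ∈ S, mul x y ∈ S)
    {x : A} (hx : x ∈ S) (hx0 : x ≠ 0) :
    ∃ y ∈ S, mul x y = one := by
  let f : S →ₗ[k] S := (mul x).restrict (fun y hy => hclosed x hx y hy)
  have hinj : Function.Injective f := by
    intro a b hab
    apply Subtype.ext
    apply left_cancel (mul := mul) hdiv hx0
    have := congrArg (fun z : S => (z : A)) hab
    simpa [f, LinearMap.restrict_apply] using this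
  obtain ⟨y, hy⟩ := (LinearMap.injective_iff_surjective).mp hinj ⟨one, hone_mem⟩
  refine ⟨y, y.2, ?_⟩
  have := congrArg (fun z : S => (z : A)) hy
  simpa [f, LinearMap.restrict_apply] using this

end Field

end KleinAux

namespace KleinAux

section Nuc

variable {A : Type} [AddCommGroup A] [Module k A] [FiniteDimensional k A]
variable {mul : A →ₗ[k] A →ₗ[k] A} {one : A}

theorem one_mem_nucleus (hone : ∀ x : A, mul one x = x ∧ mul x one = x) :
    one ∈ nucleus mul := by
  intro x y
  rw [(hone (mul x y)).2, (hone y).2]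

theorem nucleus_mul_mem {z w : A} (hz : z ∈ nucleus mul) (hw : w ∈ nucleus mul) :
    mul z w ∈ nucleus mul := by
  intro x y
  calc mul (mul x y) (mul z w) = mul (mul (mul x y) z) w := (hw (mul x y) z).symm
    _ = mul (mul x (mul y z)) w := by rw [hz x y]
    _ = mul x (mul (mul y z) w) := hw x (mul y z)
    _ = mul x (mul y (mul z w)) := by rw [hw y z]

theorem nucleus_stable (φ : A ≃ₗ[k] A) (hm : ∀ x y : A, φ (mul x y) = mul (φ x) (φ y))
    (h2 : ∀ x, φ (φ x) = x) {z : A} (hz : z ∈ nucleus mul) : φ z ∈ nucleus mul := by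
  intro x y
  calc mul (mul x y) (φ z)
      = mul (mul (φ (φ x)) (φ (φ y))) (φ z) := by rw [h2, h2]
    _ = mul (φ (mul (φ x) (φ y))) (φ z) := by rw [hm (φ x) (φ y)]
    _ = φ (mul (mul (φ x) (φ y)) z) := by rw [hm (mul (φ x) (φ y)) z]
    _ = φ (mul (φ x) (mul (φ y) z)) := by rw [hz (φ x) (φ y)]
    _ = mul (φ (φ x)) (φ (mul (φ y) z)) := by rw [hm (φ x) (mul (φ y) z)]
    _ = mul (φ (φ x)) (mul (φ (φ y)) (φ z)) := by rw [hm (φ y) z]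
    _ = mul x (mul y (φ z)) := by rw [h2, h2]

theorem nucleus_inv (hdiv : ∀ a : A, a ≠ 0 →
      Function.Bijective (fun x => mul a x) ∧ Function.Bijective (fun x => mul x a))
    (hone : ∀ x : A, mul one x = x ∧ mul x one = x)
    {z : A} (hz : z ∈ nucleus mul) (hz0 : z ≠ 0) :
    ∃ y ∈ nucleus mul, mul z y = one ∧ mul y z = one := by
  obtain ⟨y, hyN, hy⟩ := exists_right_inv hdiv (nucleus mul) (one_mem_nucleus hone)
    (fun a ha b hb => nucleus_mul_mem ha hb) hz hz0
  refine ⟨y, hyN, hy, ?_⟩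
  apply left_cancel (mul := mul) hdiv hz0
  calc mul z (mul y z) = mul (mul z y) z := (hz z y).symm
    _ = mul one z := by rw [hy]
    _ = z := (hone z).1
    _ = mul z one := ((hone z).2).symm

theorem finrank_span_pair' {u v : A} (h : LinearIndependent k ![u, v]) :
    finrank k (Submodule.span k {u, v}) = 2 := by
  have h2 := finrank_span_eq_card h
  rw [Matrix.range_cons_cons_empty] at h2
  simpa using h2

theorem indep_one_u (h4 : finrank k A = 4)
    (hone : ∀ x : A, mul one x = x ∧ mul x one = x)
    {u : A} (hu : u ∉ Set.range (fun s : k => s • one)) :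
    LinearIndependent k ![one, u] := by
  have h1 : one ≠ 0 := one_ne_zero' h4 hone
  rw [LinearIndependent.pair_iff]
  intro s t hst
  by_cases ht : t = 0
  · subst ht
    rw [zero_smul, add_zero] at hst
    rcases smul_eq_zero.mp hst with h | h
    · exact ⟨h, rfl⟩
    · exact absurd h h1
  · exfalso
    apply hu
    refine ⟨-(t⁻¹ * s), ?_⟩
    have h5 : t • u = -(s • one) := by rw [eq_neg_iff_add_eq_zero, add_comm]; exact hst
    have h6 : u = t⁻¹ • (t • u) := by rw [smul_smul, inv_mul_cancel₀ ht, one_smul]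
    show (-(t⁻¹ * s)) • one = u
    rw [h6, h5, smul_neg, smul_smul, ← neg_smul]

end Nuc

end KleinAux

namespace KleinAux

section Nuc2

variable {A : Type} [AddCommGroup A] [Module k A] [FiniteDimensional k A]
variable {mul : A →ₗ[k] A →ₗ[k] A} {one : A}

theorem two_le_finrank_nucleus (h4 : finrank k A = 4)
    (hone : ∀ x : A, mul one x = x ∧ mul x one = x)
    (hproper : Set.range (fun s : k => s • one) ⊂ rightNucleusSet mul) :
    ∃ u ∈ nucleus mul, LinearIndependent k ![one, u] ∧
      Submodule.span k {one, u} ≤ nucleus mul ∧ 2 ≤ finrank k (nucleus mul) := by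
  obtain ⟨u, huN, hur⟩ := Set.exists_of_ssubset hproper
  have hind := indep_one_u (mul := mul) h4 hone hur
  have hle : Submodule.span k {one, u} ≤ nucleus mul := by
    rw [Submodule.span_le]
    rintro w (rfl | rfl)
    · exact one_mem_nucleus hone
    · exact huN
  refine ⟨u, huN, hind, hle, ?_⟩
  calc 2 = finrank k (Submodule.span k {one, u}) := (finrank_span_pair' hind).symm
    _ ≤ finrank k (nucleus mul) := Submodule.finrank_mono hle

theorem finrank_nucleus_le_two (h4 : finrank k A = 4)
    (hone : ∀ x : A, mul one x = x ∧ mul x one = x)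
    (hdiv : ∀ a : A, a ≠ 0 →
      Function.Bijective (fun x => mul a x) ∧ Function.Bijective (fun x => mul x a))
    (hnot : ¬ ∀ x y z : A, mul (mul x y) z = mul x (mul y z)) :
    finrank k (nucleus mul) ≤ 2 := by
  push_neg at hnot
  obtain ⟨a, b, w, hab⟩ := hnot
  have hwN : w ∉ nucleus mul := fun h => hab (h a b)
  have hw0 : w ≠ 0 := by
    intro h
    exact hwN (h ▸ (nucleus mul).zero_mem)
  have hbij : Function.Bijective ⇑(mul w) := (hdiv w hw0).1
  let e : A ≃ₗ[k] A := LinearEquiv.ofBijective (mul w) hbij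
  set N := nucleus mul with hN
  set P := Submodule.map (e : A →ₗ[k] A) N with hP
  have hinf : N ⊓ P = ⊥ := by
    rw [eq_bot_iff]
    rintro v ⟨hvN, z, hzN, rfl⟩
    have hez : (e : A →ₗ[k] A) z = mul w z := rfl
    by_cases hz0 : z = 0
    · simp [hz0]
    · exfalso
      obtain ⟨y, hyN, hy1, hy2⟩ := nucleus_inv hdiv hone hzN hz0
      apply hwN
      have hkey : mul (mul ((e : A →ₗ[k] A) z) y) z = mul w z := by
        calc mul (mul ((e : A →ₗ[k] A) z) y) z
            = mul ((e : A →ₗ[k] A) z) (mul y z) := hzN _ y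
          _ = mul ((e : A →ₗ[k] A) z) one := by rw [hy2]
          _ = (e : A →ₗ[k] A) z := (hone _).2
          _ = mul w z := rfl
      have hw' : mul ((e : A →ₗ[k] A) z) y = w := right_cancel (mul := mul) hdiv hz0 hkey
      rw [← hw']
      exact nucleus_mul_mem hvN hyN
  have hsum := Submodule.finrank_sup_add_finrank_inf_eq N P
  rw [hinf, finrank_bot] at hsum
  have hPN : finrank k P = finrank k N := LinearEquiv.finrank_map_eq e N
  have hle : finrank k (N ⊔ P : Submodule k A) ≤ 4 := h4 ▸ Submodule.finrank_le _
  omega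

end Nuc2

end KleinAux

namespace KleinAux

section Root

variable {A : Type} [AddCommGroup A] [Module k A] [FiniteDimensional k A]
variable {mul : A →ₗ[k] A →ₗ[k] A} {one : A}

theorem root_cases (h4 : finrank k A = 4)
    (hone : ∀ x : A, mul one x = x ∧ mul x one = x)
    (hdiv : ∀ a : A, a ≠ 0 →
      Function.Bijective (fun x => mul a x) ∧ Function.Bijective (fun x => mul x a))
    {u v : A} {a b : k}
    (hsq : mul u u = a • one + b • u)
    (hvsq : mul v v = a • one + b • v)
    (hcomm : mul v u = mul u v) :
    v = u ∨ v = b • one - u := by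
  have hexp : mul (v - u) (v + u - b • one) =
      mul v v + mul v u - b • mul v one - mul u v - mul u u + b • mul u one := by
    simp only [map_sub, map_add, map_smul, LinearMap.sub_apply, LinearMap.add_apply,
      LinearMap.smul_apply, smul_sub, smul_add]
    abel
  have hprod : mul (v - u) (v + u - b • one) = 0 := by
    rw [hexp, hvsq, hsq, hcomm, (hone v).2, (hone u).2]
    abel
  by_cases hvu : v = u
  · exact Or.inl hvu
  · right
    have hne : v - u ≠ 0 := sub_ne_zero.mpr hvu
    have h0 : mul (v - u) (v + u - b • one) = mul (v - u) 0 := by rw [hprod, map_zero]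
    have hz : v + u - b • one = 0 := left_cancel (mul := mul) hdiv hne h0
    have : v + u = b • one := sub_eq_zero.mp hz
    exact eq_sub_of_add_eq this

end Root

end KleinAux

namespace KleinAux

section Assemble

variable {A : Type} [AddCommGroup A] [Module k A] [FiniteDimensional k A]
variable {mul : A →ₗ[k] A →ₗ[k] A} {one : A}

theorem nucleus_isKleinian (hchar : (2:k) ≠ 0) (h4 : finrank k A = 4)
    (hone : ∀ x : A, mul one x = x ∧ mul x one = x)
    (hdiv : ∀ a : A, a ≠ 0 →
      Function.Bijective (fun x => mul a x) ∧ Function.Bijective (fun x => mul x a))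
    (hN2 : finrank k (nucleus mul) = 2)
    (δ γ : A ≃ₗ[k] A) (hpair : IsKleinPair mul δ γ)
    (hfix : nucleus mul ≤ fixedSub γ) :
    IsKleinianSubfield mul one (rightNucleusSet mul) := by
  obtain ⟨hmδ, hmγ, hδ2, hγ2, hcm, hδne, hγne, hne⟩ := hpair
  have hEeq : fixedSub γ = nucleus mul := by
    have hfr : finrank k (fixedSub γ) = 2 := finrank_fixed_eq_two hchar h4 hdiv γ hmγ hγ2 hγne
    exact (Submodule.eq_of_le_of_finrank_le hfix (by rw [hfr, hN2])).symm
  refine ⟨one_mem_nucleus hone, fun x hx y hy => (nucleus mul).add_mem hx hy,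
    fun t x hx => (nucleus mul).smul_mem t hx,
    fun x hx y hy => nucleus_mul_mem hx hy,
    fun x hx y hy => comm_of_finrank_le_two h4 hone (nucleus mul) (one_mem_nucleus hone)
      (le_of_eq hN2) hx hy,
    fun x _ y _ z hz => hz x y,
    fun x hx hx0 => ?_, fun x hx => hx,
    δ, γ, ⟨hmδ, hmγ, hδ2, hγ2, hcm, hδne, hγne, hne⟩, ?_⟩
  · obtain ⟨y, hy, h1, _⟩ := nucleus_inv hdiv hone hx hx0
    exact ⟨y, hy, h1⟩
  · exact congrArg (fun p : Submodule k A => (p : Set A)) hEeq.symm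

theorem unique_kleinian (hchar : (2:k) ≠ 0) (h4 : finrank k A = 4)
    (hdiv : ∀ a : A, a ≠ 0 →
      Function.Bijective (fun x => mul a x) ∧ Function.Bijective (fun x => mul x a))
    (hN2 : finrank k (nucleus mul) = 2)
    {S : Set A} (hS : IsKleinianSubfield mul one S) : S = rightNucleusSet mul := by
  obtain ⟨-, -, -, -, -, -, -, hsub, α', β', ⟨hmα', hmβ', hα2', hβ2', -, -, hβne', -⟩, hSeq⟩ := hS
  have hle : fixedSub β' ≤ nucleus mul := by
    intro x hx
    have hxS : x ∈ S := by rw [hSeq]; exact hx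
    exact hsub hxS
  have hfr : finrank k (fixedSub β') = 2 := finrank_fixed_eq_two hchar h4 hdiv β' hmβ' hβ2' hβne'
  have heq : fixedSub β' = nucleus mul := Submodule.eq_of_le_of_finrank_le hle (by rw [hfr, hN2])
  rw [hSeq]
  exact congrArg (fun p : Submodule k A => (p : Set A)) heq

end Assemble

end KleinAux


/-- Let `k` be a field of characteristic ≠ 2 and `A ∈ 𝒞(k)`. Then `A`
possesses a Kleinian subfield. Moreover, if `A` is not associative, then the right nucleus
`N_r(A)` is a Kleinian subfield of `A`, and it is the unique Kleinian subfield of `A`. -/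
theorem exists_kleinianSubfield (hchar : (2 : k) ≠ 0)
    (A : Type) [AddCommGroup A] [Module k A] [FiniteDimensional k A]
    (mul : A →ₗ[k] A →ₗ[k] A) (one : A)
    (h4 : finrank k A = 4)
    (hone : ∀ x : A, mul one x = x ∧ mul x one = x)
    (hdiv : ∀ a : A, a ≠ 0 →
      Function.Bijective (fun x => mul a x) ∧ Function.Bijective (fun x => mul x a))
    (hproper : Set.range (fun s : k => s • one) ⊂ rightNucleusSet mul)
    (hkl : ∃ α β : A ≃ₗ[k] A, IsKleinPair mul α β) :
    (∃ S : Set A, IsKleinianSubfield mul one S) ∧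
    ((¬ ∀ x y z : A, mul (mul x y) z = mul x (mul y z)) →
      IsKleinianSubfield mul one (rightNucleusSet mul) ∧
      ∀ S : Set A, IsKleinianSubfield mul one S → S = rightNucleusSet mul) := by
  classical
  obtain ⟨α, β, hmα, hmβ, hα2, hβ2, hcmαβ, hαne, hβne, hαβ⟩ := hkl
  by_cases hassoc : ∀ x y z : A, mul (mul x y) z = mul x (mul y z)
  · refine ⟨⟨(KleinAux.fixedSub β : Set A), ?_⟩, fun h => absurd hassoc h⟩
    have honeE : one ∈ KleinAux.fixedSub β := KleinAux.auto_fixes_one h4 hone hdiv β hmβ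
    have hclosed : ∀ x ∈ KleinAux.fixedSub β, ∀ y ∈ KleinAux.fixedSub β,
        mul x y ∈ KleinAux.fixedSub β := by
      intro x hx y hy
      show β (mul x y) = mul x y
      rw [hmβ, show β x = x from hx, show β y = y from hy]
    have hfr : finrank k (KleinAux.fixedSub β) = 2 :=
      KleinAux.finrank_fixed_eq_two hchar h4 hdiv β hmβ hβ2 hβne
    exact ⟨honeE, fun x hx y hy => (KleinAux.fixedSub β).add_mem hx hy,
      fun t x hx => (KleinAux.fixedSub β).smul_mem t hx,
      hclosed,
      fun x hx y hy => KleinAux.comm_of_finrank_le_two h4 hone _ honeE (le_of_eq hfr) hx hy,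
      fun x _ y _ z _ => hassoc x y z,
      fun x hx hx0 => KleinAux.exists_right_inv hdiv _ honeE hclosed hx hx0,
      fun z _ x y => hassoc x y z,
      α, β, ⟨hmα, hmβ, hα2, hβ2, hcmαβ, hαne, hβne, hαβ⟩, rfl⟩
  · obtain ⟨u, huN, hind, hspanle, h2le⟩ := KleinAux.two_le_finrank_nucleus h4 hone hproper
    have hNle2 := KleinAux.finrank_nucleus_le_two h4 hone hdiv hassoc
    have hN2 : finrank k (KleinAux.nucleus mul) = 2 := le_antisymm hNle2 h2le
    have hNspan : Submodule.span k {one, u} = KleinAux.nucleus mul :=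
      Submodule.eq_of_le_of_finrank_le hspanle
        (by rw [hN2, KleinAux.finrank_span_pair' hind])
    obtain ⟨a, b, hab⟩ := Submodule.mem_span_pair.mp
      (hNspan ▸ KleinAux.nucleus_mul_mem huN huN)
    have hsq : mul u u = a • one + b • u := hab.symm
    have honeα : α one = one := KleinAux.auto_fixes_one h4 hone hdiv α hmα
    have honeβ : β one = one := KleinAux.auto_fixes_one h4 hone hdiv β hmβ
    have hαuN : α u ∈ KleinAux.nucleus mul := KleinAux.nucleus_stable α hmα hα2 huN
    have hβuN : β u ∈ KleinAux.nucleus mul := KleinAux.nucleus_stable β hmβ hβ2 huN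
    have hcommN : ∀ x ∈ KleinAux.nucleus mul, ∀ y ∈ KleinAux.nucleus mul,
        mul x y = mul y x :=
      fun x hx y hy => KleinAux.comm_of_finrank_le_two h4 hone _
        (KleinAux.one_mem_nucleus hone) (le_of_eq hN2) hx hy
    have hαsq : mul (α u) (α u) = a • one + b • α u := by
      rw [← hmα u u, hsq, map_add, map_smul, map_smul, honeα]
    have hβsq : mul (β u) (β u) = a • one + b • β u := by
      rw [← hmβ u u, hsq, map_add, map_smul, map_smul, honeβ]
    have hαcase := KleinAux.root_cases h4 hone hdiv hsq hαsq (hcommN _ hαuN _ huN)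
    have hβcase := KleinAux.root_cases h4 hone hdiv hsq hβsq (hcommN _ hβuN _ huN)
    have hmem : ∀ w ∈ KleinAux.nucleus mul, ∃ s t : k, s • one + t • u = w := by
      intro w hw
      rw [← hNspan] at hw
      exact Submodule.mem_span_pair.mp hw
    have hfixof : ∀ γ : A ≃ₗ[k] A, γ one = one → γ u = u →
        KleinAux.nucleus mul ≤ KleinAux.fixedSub γ := by
      intro γ hg1 hgu w hw
      obtain ⟨s, t, hst⟩ := hmem w hw
      show γ w = w
      rw [← hst, map_add, map_smul, map_smul, hg1, hgu]
    have hmain : IsKleinianSubfield mul one (rightNucleusSet mul) := by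
      rcases hβcase with hβu | hβu
      · exact KleinAux.nucleus_isKleinian hchar h4 hone hdiv hN2 α β
          ⟨hmα, hmβ, hα2, hβ2, hcmαβ, hαne, hβne, hαβ⟩ (hfixof β honeβ hβu)
      · rcases hαcase with hαu | hαu
        · exact KleinAux.nucleus_isKleinian hchar h4 hone hdiv hN2 β α
            ⟨hmβ, hmα, hβ2, hα2, fun x => (hcmαβ x).symm, hβne, hαne, Ne.symm hαβ⟩
            (hfixof α honeα hαu)
        · set γ : A ≃ₗ[k] A := α ≪≫ₗ β with hγdef
          have hγapp : ∀ x, γ x = β (α x) := fun x => rfl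
          have hmγ : ∀ x y, γ (mul x y) = mul (γ x) (γ y) := by
            intro x y
            rw [hγapp, hmα, hmβ, hγapp, hγapp]
          have hγ2' : ∀ x, γ (γ x) = x := by
            intro x
            rw [hγapp, hγapp, hcmαβ (α x), hα2, hβ2]
          have hcmγ : ∀ x, α (γ x) = γ (α x) := by
            intro x
            rw [hγapp, hγapp]
            exact hcmαβ (α x)
          have hγne : γ ≠ LinearEquiv.refl k A := by
            intro h
            apply hαβ
            apply LinearEquiv.ext
            intro x
            have hx := DFunLike.congr_fun h (α x)
            rw [hγapp, hα2] at hx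
            exact hx.symm
          have hαγ : α ≠ γ := by
            intro h
            apply hβne
            apply LinearEquiv.ext
            intro x
            have hx := DFunLike.congr_fun h (α.symm x)
            rw [hγapp, α.apply_symm_apply] at hx
            exact hx.symm
          have hγu : γ u = u := by
            rw [hγapp, hαu, map_sub, map_smul, honeβ, hβu]
            abel
          have hγone : γ one = one := by rw [hγapp, honeα, honeβ]
          exact KleinAux.nucleus_isKleinian hchar h4 hone hdiv hN2 α γ
            ⟨hmα, hmγ, hα2, hγ2', hcmγ, hαne, hγne, hαγ⟩ (hfixof γ hγone hγu)
    exact ⟨⟨_, hmain⟩, fun _ =>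
      ⟨hmain, fun S hS => KleinAux.unique_kleinian hchar h4 hdiv hN2 hS⟩⟩
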